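/- Let n ≥ 2, let h₁, …, h_{n−1} be positive reals with arithmetic mean A = (1/(n−1))·Σᵢ hᵢ and geometric mean G = (Πᵢ hᵢ)^{1/(n−1)}, and let 0 < h̲ ≤ hᵢ ≤ h̄ for all i. Define, for a ∈ [h̲, h̄], Dₙ(a) = log( ((n−1)·A + a)/n ) − (1/n)·log( G^{n−1}·a ). Then Dₙ is decreasing on [h̲, min(A,h̄)] and increasing on [max(A,h̲), h̄]; consequently the maximum of Dₙ over [h̲, h̄] is attained at an endpoint: max_{a∈[h̲,h̄]} Dₙ(a) = max( Dₙ(h̲), Dₙ(h̄) ). -/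

import Mathlib

open scoped BigOperators

/-- Dₙ(a) is decreasing on [h̲, min(A,h̄)] and increasing on [max(A,h̲), h̄];
consequently its maximum over [h̲,h̄] is attained at an endpoint. -/
theorem stmt_17 (n : ℕ) (hn : 2 ≤ n) (h : Fin (n - 1) → ℝ)
    (hlo hhi : ℝ) (h0 : 0 < hlo)
    (hbd : ∀ i, hlo ≤ h i ∧ h i ≤ hhi) :
    let A : ℝ := (∑ i, h i) / ((n : ℝ) - 1)
    let G : ℝ := (∏ i, h i) ^ ((1 : ℝ) / ((n : ℝ) - 1))
    let D : ℝ → ℝ := fun a =>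
      Real.log ((((n : ℝ) - 1) * A + a) / n) - (1 / (n : ℝ)) * Real.log (G ^ (n - 1) * a)
    StrictAntiOn D (Set.Icc hlo (min A hhi)) ∧
    StrictMonoOn D (Set.Icc (max A hlo) hhi) ∧
    (∀ a ∈ Set.Icc hlo hhi, D a ≤ max (D hlo) (D hhi)) := by
  intro A G D
  have hn1 : 1 ≤ n := le_trans (by norm_num) hn
  have hnR2 : (2:ℝ) ≤ (n:ℝ) := by exact_mod_cast hn
  have hnR : (0:ℝ) < (n:ℝ) - 1 := by linarith
  have hnpos : (0:ℝ) < (n:ℝ) := by linarith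
  have hcast : ((n - 1 : ℕ) : ℝ) = (n:ℝ) - 1 := by
    push_cast [Nat.cast_sub hn1]; ring
  have hne : Nonempty (Fin (n-1)) := ⟨⟨0, by omega⟩⟩
  set S : ℝ := ∑ i, h i with hSdef
  set C : ℝ := ∏ i, h i with hCdef
  have hipos : ∀ i, 0 < h i := fun i => lt_of_lt_of_le h0 (hbd i).1
  have hCpos : 0 < C := Finset.prod_pos (fun i _ => hipos i)
  have hSlo : ((n:ℝ)-1) * hlo ≤ S := by
    have := Finset.sum_le_sum (fun i (_ : i ∈ Finset.univ) => (hbd i).1)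
    simpa [Finset.sum_const, Finset.card_univ, hcast, nsmul_eq_mul] using this
  have hShi : S ≤ ((n:ℝ)-1) * hhi := by
    have := Finset.sum_le_sum (fun i (_ : i ∈ Finset.univ) => (hbd i).2)
    simpa [Finset.sum_const, Finset.card_univ, hcast, nsmul_eq_mul] using this
  have hSpos : 0 < S := lt_of_lt_of_le (by positivity) hSlo
  have hloA : hlo ≤ A := by
    rw [le_div_iff₀ hnR]; linarith
  have hAhi : A ≤ hhi := by
    rw [div_le_iff₀ hnR]; linarith
  have hminA : min A hhi = A := min_eq_left hAhi
  have hmaxA : max A hlo = A := max_eq_left hloA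
  have hSA : ((n:ℝ)-1) * A = S := by
    show ((n:ℝ)-1) * (S / ((n:ℝ)-1)) = S
    field_simp
  have hGC : G ^ (n-1) = C := by
    rw [show G ^ (n-1) = G ^ ((n-1 : ℕ) : ℝ) from (Real.rpow_natCast G (n-1)).symm]
    show ((C ^ ((1:ℝ)/((n:ℝ)-1))) : ℝ) ^ ((n-1:ℕ):ℝ) = C
    rw [← Real.rpow_mul hCpos.le, hcast]
    rw [show (1:ℝ)/((n:ℝ)-1) * ((n:ℝ)-1) = 1 by field_simp]
    exact Real.rpow_one C
  have hDeq : ∀ a, D a = Real.log ((S + a)/n) - (1/(n:ℝ)) * Real.log (C * a) := by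
    intro a; simp only [D, hSA, hGC]
  have hder : ∀ a : ℝ, 0 < a → HasDerivAt D (1/(S+a) - 1/((n:ℝ)*a)) a := by
    intro a ha
    have hSa : 0 < S + a := by linarith
    have h1 : HasDerivAt (fun x : ℝ => (S + x)/(n:ℝ)) (1/(n:ℝ)) a := by
      simpa using (((hasDerivAt_id a).const_add S).div_const (n:ℝ))
    have h1' : HasDerivAt (fun x : ℝ => Real.log ((S + x)/(n:ℝ)))
        ((1/(n:ℝ)) / ((S + a)/(n:ℝ))) a := h1.log (by positivity)
    have h2 : HasDerivAt (fun x : ℝ => C * x) C a := by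
      simpa using (hasDerivAt_id a).const_mul C
    have h2' : HasDerivAt (fun x : ℝ => (1/(n:ℝ)) * Real.log (C * x))
        ((1/(n:ℝ)) * (C / (C * a))) a := (h2.log (by positivity)).const_mul _
    have := h1'.sub h2'
    have heq : (fun x : ℝ => Real.log ((S + x)/(n:ℝ)) - (1/(n:ℝ)) * Real.log (C * x)) = D := by
      funext x; rw [hDeq x]
    rw [show ((fun x : ℝ => Real.log ((S + x)/(n:ℝ))) - fun x : ℝ => (1/(n:ℝ)) * Real.log (C * x)) = D from heq] at this
    refine this.congr_deriv ?_
    field_simp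
  have hcont : ∀ s : Set ℝ, s ⊆ Set.Ici hlo → ContinuousOn D s := by
    intro s hs a ha
    exact ((hder a (lt_of_lt_of_le h0 (hs ha))).continuousAt).continuousWithinAt
  have hanti : StrictAntiOn D (Set.Icc hlo A) := by
    apply strictAntiOn_of_deriv_neg (convex_Icc _ _)
    · exact hcont _ (fun x hx => hx.1)
    · intro a ha
      rw [interior_Icc] at ha
      have hapos : 0 < a := lt_of_lt_of_le h0 ha.1.le
      rw [(hder a hapos).deriv]
      have h1 : (n:ℝ) * a < S + a := by
        have : ((n:ℝ)-1) * a < S := by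
          have := (lt_div_iff₀ hnR).mp ha.2
          linarith
        linarith
      have := one_div_lt_one_div_of_lt (by positivity : (0:ℝ) < (n:ℝ)*a) h1
      linarith
  have hmono : StrictMonoOn D (Set.Icc A hhi) := by
    apply strictMonoOn_of_deriv_pos (convex_Icc _ _)
    · exact hcont _ (fun x hx => le_trans hloA hx.1)
    · intro a ha
      rw [interior_Icc] at ha
      have hapos : 0 < a := lt_of_lt_of_le h0 (le_trans hloA ha.1.le)
      rw [(hder a hapos).deriv]
      have h1 : S + a < (n:ℝ) * a := by
        have : S < ((n:ℝ)-1) * a := by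
          have := (div_lt_iff₀ hnR).mp ha.1
          linarith
        linarith
      have := one_div_lt_one_div_of_lt (by positivity : (0:ℝ) < S + a) h1
      linarith
  refine ⟨by rwa [hminA], by rwa [hmaxA], ?_⟩
  intro a ha
  rcases le_total a A with hc | hc
  · have := hanti.antitoneOn ⟨le_refl hlo, hloA⟩ ⟨ha.1, hc⟩ ha.1
    exact le_trans this (le_max_left _ _)
  · have := hmono.monotoneOn ⟨hc, ha.2⟩ ⟨hAhi, le_refl hhi⟩ ha.2
    exact le_trans this (le_max_right _ _)
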